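/- Let Γ be a positive bounded linear operator on a Hilbert space X and let ε > 0. Then I − ε(εI + Γ)⁻¹π_M is boundedly invertible, the operator ε(I − π_M) + Γ is boundedly invertible, and (ε(I − π_M) + Γ)⁻¹ = (I − ε(εI + Γ)⁻¹π_M)⁻¹ (εI + Γ)⁻¹. -/

import Mathlib

open scoped RealInnerProductSpace
open Filter

set_option maxHeartbeats 1000000

/-- The orthogonal projection of `X` onto the subspace `M`, as a continuous linear map. -/
noncomputable def finProj {X : Type*} [NormedAddCommGroup X] [InnerProductSpace ℝ X]
    (M : Submodule ℝ X) [CompleteSpace M] : X →L[ℝ] X :=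
  M.subtypeL ∘L Submodule.orthogonalProjection M

/-- Let `Γ` be a positive bounded linear operator on a Hilbert space `X` and
`ε > 0`. Then `I − ε(εI + Γ)⁻¹π_M` is boundedly invertible, `ε(I − π_M) + Γ` is boundedly
invertible, and `(ε(I − π_M) + Γ)⁻¹ = (I − ε(εI + Γ)⁻¹π_M)⁻¹ (εI + Γ)⁻¹`. -/
theorem resolvent_like_factorization
    {X : Type*} [NormedAddCommGroup X] [InnerProductSpace ℝ X] [CompleteSpace X]
    (M : Submodule ℝ X) [FiniteDimensional ℝ M]
    (Γ : X →L[ℝ] X) (hΓsa : IsSelfAdjoint Γ)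
    (hΓpos : ∀ x : X, x ≠ 0 → 0 < ⟪Γ x, x⟫)
    (ε : ℝ) (hε : 0 < ε)
    (R : X →L[ℝ] X)
    (hR : R ∘L (ε • (1 : X →L[ℝ] X) + Γ) = 1 ∧ (ε • (1 : X →L[ℝ] X) + Γ) ∘L R = 1) :
    ∃ S Q : X →L[ℝ] X,
      (S ∘L ((1 : X →L[ℝ] X) - ε • (R ∘L finProj M)) = 1 ∧
        ((1 : X →L[ℝ] X) - ε • (R ∘L finProj M)) ∘L S = 1) ∧
      (Q ∘L (ε • ((1 : X →L[ℝ] X) - finProj M) + Γ) = 1 ∧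
        (ε • ((1 : X →L[ℝ] X) - finProj M) + Γ) ∘L Q = 1) ∧
      Q = S ∘L R := by
  obtain ⟨hR1, hR2⟩ := hR
  set p : X →L[ℝ] M := Submodule.orthogonalProjection M with hp
  set j : M →L[ℝ] X := M.subtypeL with hj
  set A : X →L[ℝ] X := ε • (1 : X →L[ℝ] X) + Γ with hA
  set D : X →L[ℝ] X := ε • ((1 : X →L[ℝ] X) - finProj M) + Γ with hD
  set T : X →L[ℝ] X := (1 : X →L[ℝ] X) - ε • (R ∘L finProj M) with hT
  have hR1' : ∀ x, R (A x) = x := fun x => congrFun (congrArg DFunLike.coe hR1) x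
  have hR2' : ∀ x, A (R x) = x := fun x => congrFun (congrArg DFunLike.coe hR2) x
  have hDx : ∀ x, D x = A x - ε • j (p x) := by
    intro x
    simp only [hD, hA, finProj, hj, hp, ContinuousLinearMap.add_apply,
      ContinuousLinearMap.smul_apply, ContinuousLinearMap.sub_apply,
      ContinuousLinearMap.one_apply, ContinuousLinearMap.coe_comp', Function.comp_apply,
      smul_sub]
    abel
  have hTx : ∀ x, T x = x - ε • R (j (p x)) := by
    intro x
    simp [hT, finProj, hj, hp]
  -- injectivity of D
  have hDinj : Function.Injective D := by
    intro x y hxy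
    by_contra hne
    set z := x - y with hz
    have hzne : z ≠ 0 := sub_ne_zero.mpr hne
    have hDz : D z = 0 := by rw [hz, map_sub, hxy, sub_self]
    have horth : ⟪z - j (p z), (j (p z) : X)⟫ = 0 :=
      M.starProjection_inner_eq_zero z (j (p z)) (SetLike.coe_mem _)
    have hpos : 0 < ⟪D z, z⟫ := by
      have h1 : ⟪z - j (p z), z⟫ = ⟪z - j (p z), z - j (p z)⟫ := by
        have h0 : ⟪z - j (p z), z⟫
            = ⟪z - j (p z), z - j (p z)⟫ + ⟪z - j (p z), (j (p z) : X)⟫ := by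
          rw [← inner_add_right]
          congr 1
          abel
        rw [h0, horth, add_zero]
      have h2 : 0 ≤ ⟪z - j (p z), z⟫ := h1 ▸ real_inner_self_nonneg
      have h3 : ⟪D z, z⟫ = ε * ⟪z - j (p z), z⟫ + ⟪Γ z, z⟫ := by
        rw [hDx z]
        simp only [hA, ContinuousLinearMap.add_apply, ContinuousLinearMap.smul_apply,
          ContinuousLinearMap.one_apply, inner_sub_left, inner_add_left,
          real_inner_smul_left]
        ring
      have h4 := hΓpos z hzne
      have h5 : 0 ≤ ε * ⟪z - j (p z), z⟫ := mul_nonneg hε.le h2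
      rw [h3]
      linarith
    rw [hDz, inner_zero_left] at hpos
    exact lt_irrefl 0 hpos
  have hRinj : Function.Injective R := fun x y h => by
    have h' := congrArg A h; rwa [hR2', hR2'] at h'
  have hRD : ∀ x, R (D x) = T x := by
    intro x
    rw [hDx x, map_sub, hR1', map_smul, hTx]
  have hTinj : Function.Injective T := by
    intro x y h
    exact hDinj (hRinj (by rw [hRD, hRD, h]))
  -- the finite-dimensional operator on M
  set c : M →L[ℝ] M := ContinuousLinearMap.id ℝ M - ε • (p ∘L (R ∘L j)) with hc
  have hcx : ∀ m : M, c m = m - ε • p (R (j m)) := by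
    intro m; simp [hc]
  have hcinj : Function.Injective c := by
    rw [injective_iff_map_eq_zero c]
    intro m hm
    have hmeq : (m : M) = ε • p (R (j m)) := by
      have h0 := hcx m
      rw [hm] at h0
      exact (sub_eq_zero.mp h0.symm)
    set x : X := ε • R (j m) with hxeq
    have hpx : p x = m := by
      rw [hxeq, map_smul, ← hmeq]
    have hTx0 : T x = 0 := by
      rw [hTx, hpx, hxeq, sub_self]
    have hx0 : x = 0 := hTinj (by rw [hTx0, map_zero])
    rw [← hpx, hx0, map_zero]
  have hcinj' : Function.Injective (c : M →ₗ[ℝ] M) := hcinj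
  have hcsurj : Function.Surjective (c : M →ₗ[ℝ] M) :=
    LinearMap.injective_iff_surjective.mp hcinj'
  let e : M ≃ₗ[ℝ] M := LinearEquiv.ofBijective (c : M →ₗ[ℝ] M) ⟨hcinj', hcsurj⟩
  let el : M ≃L[ℝ] M := e.toContinuousLinearEquiv
  set B : M →L[ℝ] M := (el.symm : M →L[ℝ] M) with hB
  have hcB : ∀ m : M, c (B m) = m := fun m => el.apply_symm_apply m
  have hBc : ∀ m : M, B (c m) = m := fun m => el.symm_apply_apply m
  set S : X →L[ℝ] X := 1 + ε • (R ∘L (j ∘L (B ∘L p))) with hS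
  have hSx : ∀ x, S x = x + ε • R (j (B (p x))) := by
    intro x; simp [hS]
  have key1 : ∀ x, T (S x) = x := by
    intro x
    have hn : ε • p (R (j (B (p x)))) = B (p x) - p x := by
      have h0 := hcx (B (p x))
      rw [hcB (p x)] at h0
      rw [eq_sub_iff_add_eq] at h0 ⊢
      rw [add_comm]
      exact h0
    have hpS : p (S x) = B (p x) := by
      rw [hSx, map_add, map_smul, hn]
      abel
    rw [hTx, hpS, hSx]
    abel
  have key2 : ∀ x, S (T x) = x := by
    intro x
    have hpT : p (T x) = c (p x) := by
      rw [hTx, map_sub, map_smul, hcx]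
    rw [hSx, hpT, hBc, hTx]
    abel
  have hAT : ∀ x, A (T x) = D x := by
    intro x
    rw [hTx, map_sub, map_smul, hR2', hDx]
  refine ⟨S, S ∘L R, ⟨?_, ?_⟩, ⟨?_, ?_⟩, rfl⟩
  · ext x
    exact key2 x
  · ext x
    exact key1 x
  · ext x
    simp only [ContinuousLinearMap.coe_comp', Function.comp_apply,
      ContinuousLinearMap.one_apply]
    rw [show (ε • ((1 : X →L[ℝ] X) - finProj M) + Γ) x = D x from rfl, hRD, key2]
  · ext x
    simp only [ContinuousLinearMap.coe_comp', Function.comp_apply,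
      ContinuousLinearMap.one_apply]
    rw [show ∀ y, (ε • ((1 : X →L[ℝ] X) - finProj M) + Γ) y = D y from fun _ => rfl,
      ← hAT, key1, hR2']
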